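/- Let f : X → ℝ be continuous and let U = (a,b) and V = (c,d) be two overlapping open intervals with a < c < b < d. If C is a connected component of f⁻¹(U) and C' is a connected component of f⁻¹(V), then C ∩ C' is nonempty if and only if C and C' contain a common connected component of f⁻¹((c,b)). -/
import Mathlib


open Set

/-- For overlapping intervals `U = (a,b)` and `V = (c,d)` with
`a < c < b < d`, a component `C` of `f ⁻¹' U` and a component `C'` of `f ⁻¹' V`
intersect iff they contain a common connected component of `f ⁻¹' (c,b)`. -/
theorem components_intersect_iff_common_overlap_component
    {X : Type*} [TopologicalSpace X] (f : X → ℝ) (hf : Continuous f)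
    (a b c d : ℝ) (hac : a < c) (hcb : c < b) (hbd : b < d)
    (C C' : Set X)
    (hC : ∃ x ∈ f ⁻¹' Ioo a b, C = connectedComponentIn (f ⁻¹' Ioo a b) x)
    (hC' : ∃ x ∈ f ⁻¹' Ioo c d, C' = connectedComponentIn (f ⁻¹' Ioo c d) x) :
    (C ∩ C').Nonempty ↔
      ∃ D : Set X, (∃ x ∈ f ⁻¹' Ioo c b, D = connectedComponentIn (f ⁻¹' Ioo c b) x) ∧
        D ⊆ C ∧ D ⊆ C' := by
  obtain ⟨x, hx, rfl⟩ := hC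
  obtain ⟨x', hx', rfl⟩ := hC'
  constructor
  · rintro ⟨y, hyC, hyC'⟩
    have hyU : y ∈ f ⁻¹' Ioo a b := connectedComponentIn_subset _ _ hyC
    have hyV : y ∈ f ⁻¹' Ioo c d := connectedComponentIn_subset _ _ hyC'
    have hyW : y ∈ f ⁻¹' Ioo c b := ⟨hyV.1, hyU.2⟩
    refine ⟨connectedComponentIn (f ⁻¹' Ioo c b) y, ⟨y, hyW, rfl⟩, ?_, ?_⟩
    · rw [connectedComponentIn_eq hyC]
      exact (isPreconnected_connectedComponentIn).subset_connectedComponentIn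
        (mem_connectedComponentIn hyW)
        (fun z hz => ⟨hac.trans (connectedComponentIn_subset _ _ hz).1,
          (connectedComponentIn_subset _ _ hz).2⟩)
    · rw [connectedComponentIn_eq hyC']
      exact (isPreconnected_connectedComponentIn).subset_connectedComponentIn
        (mem_connectedComponentIn hyW)
        (fun z hz => ⟨(connectedComponentIn_subset _ _ hz).1,
          (connectedComponentIn_subset _ _ hz).2.trans hbd⟩)
  · rintro ⟨D, ⟨z, hz, rfl⟩, hDC, hDC'⟩
    exact ⟨z, hDC (mem_connectedComponentIn hz), hDC' (mem_connectedComponentIn hz)⟩
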